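/- If u > 0 (or u < 0 together with (b-c) ≠ 0), the matrix A = [[0, u, c-b, 0],[u, 0, 0, c-b],[ε(b-c), ε(c-b), 0, 0],[ε(c-b), ε(b-c), 0, 0]] with ε > 0 has an eigenvalue with strictly positive real part; hence any interior equilibrium of the symmetric-game SA-IGA dynamics is not Lyapunov stable (for the linearized system). -/

import Mathlib

open Matrix Polynomial

lemma eval_charpoly' {n : Type*} [DecidableEq n] [Fintype n] {R : Type*} [CommRing R]
    (M : Matrix n n R) (t : R) :
    M.charpoly.eval t = (Matrix.scalar n t - M).det := by
  rw [Matrix.charpoly, _root_.eval_det, matPolyEquiv_charmatrix]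
  simp

/-- If u > 0, or u < 0 together with b ≠ c, the SA-IGA Jacobian has an eigenvalue
    (over ℂ) with strictly positive real part. -/
theorem stmt_6 (u b c ε : ℝ) (hε : ε > 0)
    (h : 0 < u ∨ (u < 0 ∧ b ≠ c)) :
    ∃ lam : ℂ, 0 < lam.re ∧
      (((!![0, u, c - b, 0;
            u, 0, 0, c - b;
            ε * (b - c), ε * (c - b), 0, 0;
            ε * (c - b), ε * (b - c), 0, 0] : Matrix (Fin 4) (Fin 4) ℝ).map
          (Complex.ofReal)).charpoly).IsRoot lam := by
  set A : Matrix (Fin 4) (Fin 4) ℝ :=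
    !![0, u, c - b, 0;
       u, 0, 0, c - b;
       ε * (b - c), ε * (c - b), 0, 0;
       ε * (c - b), ε * (b - c), 0, 0] with hA
  have key : ∀ lam : ℂ, ((A.map Complex.ofReal).charpoly).eval lam
      = lam * (lam - u) * (lam ^ 2 + u * lam + 2 * ε * ((c : ℂ) - b) ^ 2) := by
    intro lam
    rw [eval_charpoly', hA]
    simp only [Matrix.det_succ_row_zero, Fin.sum_univ_succ, Matrix.scalar_apply,
      Matrix.sub_apply, Matrix.map_apply, Matrix.diagonal_apply, Matrix.of_apply,
      Matrix.submatrix_apply, Matrix.cons_val', Matrix.cons_val_zero, Matrix.cons_val_one,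
      Matrix.head_cons, Matrix.empty_val', Matrix.cons_val_fin_one, Fin.isValue,
      Finset.univ_unique, Finset.sum_singleton, Matrix.det_fin_one, Fin.succAbove,
      Matrix.head_fin_const]
    norm_num [Fin.succ, Fin.lt_def, Matrix.cons_val_succ]
    push_cast
    ring
  rcases h with hu | ⟨hu, hbc⟩
  · refine ⟨(u : ℂ), by simpa using hu, ?_⟩
    rw [Polynomial.IsRoot, key]
    simp
  · set k : ℝ := c - b with hk
    have hk0 : k ≠ 0 := sub_ne_zero.mpr (Ne.symm hbc)
    have hk2 : 0 < k ^ 2 := by positivity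
    set D : ℝ := u ^ 2 - 8 * ε * k ^ 2 with hD
    rcases le_or_gt 0 D with hDpos | hDneg
    · -- real roots
      set s : ℝ := Real.sqrt D with hs
      have hs2 : s ^ 2 = D := Real.sq_sqrt hDpos
      have hslt : s < -u := by
        nlinarith [Real.sqrt_nonneg D, hs2, hD]
      refine ⟨(((-u + s) / 2 : ℝ) : ℂ), ?_, ?_⟩
      · simp only [Complex.ofReal_re]
        have : 0 ≤ s := Real.sqrt_nonneg D
        linarith
      · rw [Polynomial.IsRoot, key]
        have hq0 : ((-u + s) / 2) ^ 2 + u * ((-u + s) / 2) + 2 * ε * (c - b) ^ 2 = 0 := by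
          have e : ((-u + s) / 2) ^ 2 + u * ((-u + s) / 2) + 2 * ε * (c - b) ^ 2
              = (s ^ 2 - D) / 4 := by rw [hD, hk]; ring
          rw [e, hs2, sub_self, zero_div]
        have hqC := congrArg (Complex.ofReal) hq0
        push_cast at hqC
        have Q : (((-u + s) / 2 : ℝ) : ℂ) ^ 2 + (u : ℂ) * (((-u + s) / 2 : ℝ) : ℂ)
            + 2 * (ε : ℂ) * ((c : ℂ) - b) ^ 2 = 0 := by
          push_cast
          linear_combination hqC
        rw [Q]
        ring
    · -- complex roots
      set t : ℝ := Real.sqrt (-D) / 2 with ht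
      have ht2 : t ^ 2 = -D / 4 := by
        rw [ht, div_pow, Real.sq_sqrt (by linarith)]
        ring
      refine ⟨((-u / 2 : ℝ) : ℂ) + (t : ℂ) * Complex.I, ?_, ?_⟩
      · simp only [Complex.add_re, Complex.ofReal_re, Complex.mul_re, Complex.I_re,
          Complex.ofReal_im, Complex.I_im, mul_zero, mul_one, zero_mul]
        simp
        linarith
      · rw [Polynomial.IsRoot, key]
        have hI : Complex.I ^ 2 = -1 := Complex.I_sq
        have htR : t ^ 2 = 2 * ε * (c - b) ^ 2 - u ^ 2 / 4 := by
          rw [ht2, hD, hk]; ring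
        have htC : ((t : ℝ) : ℂ) ^ 2 = 2 * (ε : ℂ) * ((c : ℂ) - b) ^ 2 - (u : ℂ) ^ 2 / 4 := by
          have := congrArg (Complex.ofReal) htR
          push_cast at this
          linear_combination this
        have Q : (((-u / 2 : ℝ) : ℂ) + (t : ℂ) * Complex.I) ^ 2
            + (u : ℂ) * (((-u / 2 : ℝ) : ℂ) + (t : ℂ) * Complex.I)
            + 2 * (ε : ℂ) * ((c : ℂ) - b) ^ 2 = 0 := by
          push_cast
          linear_combination (t : ℂ) ^ 2 * hI - htC
        rw [Q]
        ring
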